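/- For every s > 0, the continued fraction s + K_{n=1}^∞ ((2n−1)²/(2s)) equals 4·(Γ((3+s)/4)/Γ((1+s)/4))², where Γ is the Gamma function. -/

import Mathlib

open Filter Real

/-- Numerators of the convergents of a generalized continued fraction with
integer part `b₀`, partial numerators `a n` and partial denominators `b n` (for `n ≥ 1`). -/
noncomputable def cfNum (b₀ : ℝ) (a b : ℕ → ℝ) : ℕ → ℝ
  | 0 => b₀
  | 1 => b 1 * b₀ + a 1
  | n + 2 => b (n + 2) * cfNum b₀ a b (n + 1) + a (n + 2) * cfNum b₀ a b n

/-- Denominators of the convergents of a generalized continued fraction. -/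
noncomputable def cfDen (a b : ℕ → ℝ) : ℕ → ℝ
  | 0 => 1
  | 1 => b 1
  | n + 2 => b (n + 2) * cfDen a b (n + 1) + a (n + 2) * cfDen a b n

/-- `IsCFLimit b₀ a b L` means: the convergents of the generalized continued fraction
`b₀ + a 1 / (b 1 + a 2 / (b 2 + ⋯))` tend to `L`. -/
def IsCFLimit (b₀ : ℝ) (a b : ℕ → ℝ) (L : ℝ) : Prop :=
  Filter.Tendsto (fun n => cfNum b₀ a b n / cfDen a b n) Filter.atTop (nhds L)

open Topology

namespace Brnckr

/-- double factorial squared -/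
noncomputable def dd : ℕ → ℝ
  | 0 => 1
  | n + 1 => (2 * (n : ℝ) + 3) ^ 2 * dd n

lemma dd_pos : ∀ n, 0 < dd n
  | 0 => by norm_num [dd]
  | n + 1 => by
      have := dd_pos n
      have h : (0:ℝ) < (2 * (n : ℝ) + 3) ^ 2 := by positivity
      simpa [dd] using mul_pos h this

noncomputable def aB : ℕ → ℝ := fun n => (2 * (n : ℝ) - 1) ^ 2

noncomputable def QQ (σ : ℝ) : ℕ → ℝ := cfDen aB (fun _ => 2 * σ)
noncomputable def PP (σ : ℝ) : ℕ → ℝ := cfNum σ aB (fun _ => 2 * σ)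

lemma QQ0 (σ : ℝ) : QQ σ 0 = 1 := rfl
lemma QQ1 (σ : ℝ) : QQ σ 1 = 2 * σ := rfl
lemma PP0 (σ : ℝ) : PP σ 0 = σ := rfl
lemma PP1 (σ : ℝ) : PP σ 1 = 2 * σ * σ + 1 := by
  show 2 * σ * σ + aB 1 = _
  norm_num [aB]

lemma QQrec (σ : ℝ) (n : ℕ) :
    QQ σ (n + 2) = 2 * σ * QQ σ (n + 1) + (2 * (n : ℝ) + 3) ^ 2 * QQ σ n := by
  show 2 * σ * QQ σ (n + 1) + aB (n + 2) * QQ σ n = _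
  have : aB (n + 2) = (2 * (n : ℝ) + 3) ^ 2 := by
    simp only [aB]; push_cast; ring
  rw [this]

lemma PPrec (σ : ℝ) (n : ℕ) :
    PP σ (n + 2) = 2 * σ * PP σ (n + 1) + (2 * (n : ℝ) + 3) ^ 2 * PP σ n := by
  show 2 * σ * PP σ (n + 1) + aB (n + 2) * PP σ n = _
  have : aB (n + 2) = (2 * (n : ℝ) + 3) ^ 2 := by
    simp only [aB]; push_cast; ring
  rw [this]

lemma QQ_pos {σ : ℝ} (hσ : 0 < σ) : ∀ n, 0 < QQ σ n := by
  have key : ∀ n, 0 < QQ σ n ∧ 0 < QQ σ (n + 1) := by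
    intro n
    induction n with
    | zero => exact ⟨by rw [QQ0]; norm_num, by rw [QQ1]; linarith⟩
    | succ n ih =>
        refine ⟨ih.2, ?_⟩
        rw [QQrec]
        have h1 : (0:ℝ) < (2 * (n : ℝ) + 3) ^ 2 := by positivity
        nlinarith [ih.1, ih.2]
  exact fun n => (key n).1



lemma det_id (σ : ℝ) : ∀ n : ℕ,
    PP σ (n + 1) * QQ σ n - PP σ n * QQ σ (n + 1) = (-1 : ℝ) ^ n * dd n := by
  intro n
  induction n with
  | zero => rw [PP1, PP0, QQ0, QQ1]; norm_num [dd]; ring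
  | succ n ih =>
      rw [PPrec, QQrec]
      simp only [dd, pow_succ]
      linear_combination (-(2 * (n:ℝ) + 3) ^ 2) * ih

/-- the alternating term -/
noncomputable def tt (σ : ℝ) (n : ℕ) : ℝ := dd n / (QQ σ n * QQ σ (n + 1))

lemma tt_pos {σ : ℝ} (hσ : 0 < σ) (n : ℕ) : 0 < tt σ n :=
  div_pos (dd_pos n) (mul_pos (QQ_pos hσ n) (QQ_pos hσ (n + 1)))

lemma ydiff {σ : ℝ} (hσ : 0 < σ) (n : ℕ) :
    PP σ (n + 1) / QQ σ (n + 1) - PP σ n / QQ σ n = (-1 : ℝ) ^ n * tt σ n := by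
  have h0 := (QQ_pos hσ n).ne'
  have h1 := (QQ_pos hσ (n + 1)).ne'
  have hq : QQ σ (n+1) * QQ σ n ≠ 0 := by positivity
  rw [tt, div_sub_div _ _ h1 h0, div_eq_iff hq]
  rw [mul_div_assoc', div_mul_eq_mul_div, eq_div_iff (by positivity : QQ σ n * QQ σ (n+1) ≠ 0)]
  linear_combination (QQ σ (n+1) * QQ σ n) * det_id σ n

lemma y_eq_sum {σ : ℝ} (hσ : 0 < σ) (n : ℕ) :
    PP σ n / QQ σ n = σ + ∑ i ∈ Finset.range n, (-1 : ℝ) ^ i * tt σ i := by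
  induction n with
  | zero => simp [PP0, QQ0]
  | succ n ih =>
      rw [Finset.sum_range_succ, ← add_assoc, ← ih]
      have := ydiff hσ n
      linarith

lemma tt_antitone {σ : ℝ} (hσ : 0 < σ) : Antitone (tt σ) := by
  apply antitone_nat_of_succ_le
  intro n
  have q0 := QQ_pos hσ n
  have q1 := QQ_pos hσ (n + 1)
  have q2 := QQ_pos hσ (n + 2)
  have hd := dd_pos n
  rw [tt, tt, div_le_div_iff₀ (by positivity) (by positivity)]
  have h12 : QQ σ (n + 1 + 1) = 2 * σ * QQ σ (n + 1) + (2 * (n : ℝ) + 3) ^ 2 * QQ σ n :=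
    QQrec σ n
  have hdd : dd (n + 1) = (2 * (n : ℝ) + 3) ^ 2 * dd n := rfl
  rw [h12, hdd]
  nlinarith [mul_pos hd (mul_pos (mul_pos hσ q1) q1)]

/-- two-step decay -/
lemma tt_two_step {σ : ℝ} (hσ : 0 < σ) (n : ℕ) :
    tt σ (n + 2) * (2 * (n : ℝ) + 5 + 2 * σ) ≤ tt σ n * (2 * (n : ℝ) + 5) := by
  have q0 := QQ_pos hσ n
  have q1 := QQ_pos hσ (n + 1)
  have q2 := QQ_pos hσ (n + 2)
  have q3 := QQ_pos hσ (n + 3)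
  have hd := dd_pos n
  set c : ℝ := 2 * (n : ℝ) + 3 with hc
  set e : ℝ := 2 * (n : ℝ) + 5 with he
  have hcpos : 0 < c := by positivity
  have hepos : 0 < e := by positivity
  -- key product inequality
  have hrec2 : QQ σ (n + 2) = 2 * σ * QQ σ (n + 1) + c ^ 2 * QQ σ n := QQrec σ n
  have hrec3 : QQ σ (n + 3) = 2 * σ * QQ σ (n + 2) + e ^ 2 * QQ σ (n + 1) := by
    have := QQrec σ (n + 1)
    push_cast at this
    rw [this, he]; ring_nf
  have key : c ^ 2 * e * (e + 2 * σ) * (QQ σ n * QQ σ (n + 1)) ≤ QQ σ (n + 2) * QQ σ (n + 3) := by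
    rw [hrec2, hrec3, hrec2]
    nlinarith [mul_nonneg (by positivity : (0:ℝ) ≤ 2 * σ)
        (sq_nonneg (e * QQ σ (n + 1) - c ^ 2 * QQ σ n)),
      mul_pos (mul_pos hσ (mul_pos (mul_pos hcpos hcpos) hepos)) (mul_pos q0 q1),
      mul_pos (mul_pos (mul_pos hσ hσ) hσ) (mul_pos q1 q1),
      mul_pos (mul_pos (mul_pos hσ hσ) (mul_pos hcpos hcpos)) (mul_pos q0 q1)]
  have hdd2 : dd (n + 2) = e ^ 2 * c ^ 2 * dd n := by
    have h1 : dd (n + 2) = (2 * ((n:ℝ) + 1) + 3) ^ 2 * dd (n + 1) := by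
      have : dd (n + 2) = (2 * ((n + 1 : ℕ) : ℝ) + 3) ^ 2 * dd (n + 1) := rfl
      rw [this]; push_cast; ring_nf
    rw [h1, show dd (n + 1) = c ^ 2 * dd n from rfl, he]
    ring_nf
  rw [tt, tt, hdd2, div_mul_eq_mul_div, div_mul_eq_mul_div,
    div_le_div_iff₀ (by positivity) (by positivity)]
  calc e ^ 2 * c ^ 2 * dd n * (e + 2 * σ) * (QQ σ n * QQ σ (n + 1))
      = (e * dd n) * (c ^ 2 * e * (e + 2 * σ) * (QQ σ n * QQ σ (n + 1))) := by ring
    _ ≤ (e * dd n) * (QQ σ (n + 2) * QQ σ (n + 3)) := by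
        apply mul_le_mul_of_nonneg_left key (by positivity)
    _ = dd n * e * (QQ σ (n + 2) * QQ σ (n + 3)) := by ring


/-- harmonic-type sum -/
noncomputable def HH (k : ℕ) : ℝ := ∑ j ∈ Finset.range k, 1 / (4 * (j : ℝ) + 5)

lemma HH_nonneg (k : ℕ) : 0 ≤ HH k := by
  apply Finset.sum_nonneg
  intro j _
  positivity

lemma HH_tendsto : Tendsto HH atTop atTop := by
  have h1 : Tendsto (fun k : ℕ => (1 / 9 : ℝ) * ∑ j ∈ Finset.range k, 1 / ((j : ℝ) + 1))
      atTop atTop := by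
    apply Tendsto.const_mul_atTop (by norm_num : (0:ℝ) < 1 / 9)
    exact tendsto_sum_range_one_div_nat_succ_atTop
  apply tendsto_atTop_mono _ h1
  intro k
  rw [Finset.mul_sum]
  apply Finset.sum_le_sum
  intro j _
  rw [show (1 / 9 : ℝ) * (1 / ((j:ℝ) + 1)) = 1 / (9 * ((j:ℝ) + 1)) by
      rw [div_mul_div_comm, one_mul],
    div_le_div_iff₀ (by positivity) (by positivity)]
  nlinarith [Nat.cast_nonneg (α := ℝ) j]

lemma tt_even_bound {σ : ℝ} (hσ : 0 < σ) (k : ℕ) :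
    tt σ (2 * k) * (1 + 2 * σ * HH k) ≤ tt σ 0 := by
  induction k with
  | zero => simp [HH]
  | succ k ih =>
      have hstep := tt_two_step hσ (2 * k)
      have hHk := HH_nonneg k
      have ht2 := (tt_pos hσ (2 * k)).le
      have ht2' := (tt_pos hσ (2 * k + 2)).le
      have hHsucc : HH (k + 1) = HH k + 1 / (4 * (k : ℝ) + 5) := Finset.sum_range_succ _ k
      have hidx : 2 * (k + 1) = 2 * k + 2 := by ring
      rw [hidx, hHsucc]
      have hden : (0:ℝ) < 4 * (k : ℝ) + 5 := by positivity
      -- from hstep : tt (2k+2) * (2*(2k)+5+2σ) ≤ tt (2k) * (2*(2k)+5)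
      have hc : (2 * ((2 * k : ℕ) : ℝ) + 5) = 4 * (k:ℝ) + 5 := by push_cast; ring
      rw [hc] at hstep
      -- multiply hstep by (1 + 2σ HH k + 2σ/(4k+5)) ≥ 0 and use coefficient inequality
      have hw : 0 ≤ 1 + 2 * σ * HH k + 2 * σ * (1 / (4 * (k:ℝ) + 5)) := by positivity
      -- coefficient ineq: (4k+5)*(1+2σHHk+2σ/(4k+5)) ≤ (4k+5+2σ)*(1+2σHHk)
      have hcoef : (4 * (k:ℝ) + 5) * (1 + 2 * σ * HH k + 2 * σ * (1 / (4 * (k:ℝ) + 5)))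
          ≤ (4 * (k:ℝ) + 5 + 2 * σ) * (1 + 2 * σ * HH k) := by
        have : (4 * (k:ℝ) + 5) * (2 * σ * (1 / (4 * (k:ℝ) + 5))) = 2 * σ := by
          field_simp
        nlinarith [mul_nonneg (mul_nonneg hσ.le hσ.le) hHk]
      have h1 : tt σ (2 * k + 2) * (4 * (k:ℝ) + 5 + 2 * σ) * (1 + 2 * σ * HH k + 2 * σ * (1 / (4 * (k:ℝ) + 5)))
          ≤ tt σ (2 * k) * (4 * (k:ℝ) + 5) * (1 + 2 * σ * HH k + 2 * σ * (1 / (4 * (k:ℝ) + 5))) :=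
        mul_le_mul_of_nonneg_right hstep hw
      have h2 : tt σ (2 * k) * ((4 * (k:ℝ) + 5) * (1 + 2 * σ * HH k + 2 * σ * (1 / (4 * (k:ℝ) + 5))))
          ≤ tt σ (2 * k) * ((4 * (k:ℝ) + 5 + 2 * σ) * (1 + 2 * σ * HH k)) :=
        mul_le_mul_of_nonneg_left hcoef ht2
      have h3 : tt σ (2 * k) * (1 + 2 * σ * HH k) * (4 * (k:ℝ) + 5 + 2 * σ)
          ≤ tt σ 0 * (4 * (k:ℝ) + 5 + 2 * σ) :=
        mul_le_mul_of_nonneg_right ih (by positivity)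
      have hpos : (0:ℝ) < 4 * (k:ℝ) + 5 + 2 * σ := by positivity
      rw [← mul_le_mul_iff_of_pos_right hpos]
      calc tt σ (2 * k + 2) * (1 + 2 * σ * (HH k + 1 / (4 * (k:ℝ) + 5))) * (4 * (k:ℝ) + 5 + 2 * σ)
      _ = tt σ (2 * k + 2) * (4 * (k:ℝ) + 5 + 2 * σ) * (1 + 2 * σ * HH k + 2 * σ * (1 / (4 * (k:ℝ) + 5))) := by ring
      _ ≤ tt σ (2 * k) * (4 * (k:ℝ) + 5) * (1 + 2 * σ * HH k + 2 * σ * (1 / (4 * (k:ℝ) + 5))) := h1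
      _ = tt σ (2 * k) * ((4 * (k:ℝ) + 5) * (1 + 2 * σ * HH k + 2 * σ * (1 / (4 * (k:ℝ) + 5)))) := by ring
      _ ≤ tt σ (2 * k) * ((4 * (k:ℝ) + 5 + 2 * σ) * (1 + 2 * σ * HH k)) := h2
      _ = tt σ (2 * k) * (1 + 2 * σ * HH k) * (4 * (k:ℝ) + 5 + 2 * σ) := by ring
      _ ≤ tt σ 0 * (4 * (k:ℝ) + 5 + 2 * σ) := h3

lemma tt_tendsto_zero {σ : ℝ} (hσ : 0 < σ) : Tendsto (tt σ) atTop (𝓝 0) := by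
  -- even subsequence tends to zero
  have heven : Tendsto (fun k => tt σ (2 * k)) atTop (𝓝 0) := by
    have hub : ∀ k, tt σ (2 * k) ≤ tt σ 0 / (1 + 2 * σ * HH k) := by
      intro k
      have hpos : (0:ℝ) < 1 + 2 * σ * HH k := by
        have := HH_nonneg k
        nlinarith
      rw [le_div_iff₀ hpos]
      exact tt_even_bound hσ k
    have hden : Tendsto (fun k => 1 + 2 * σ * HH k) atTop atTop := by
      apply tendsto_atTop_add_const_left
      exact Tendsto.const_mul_atTop (by linarith) HH_tendsto
    have hdiv : Tendsto (fun k => tt σ 0 / (1 + 2 * σ * HH k)) atTop (𝓝 0) :=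
      Tendsto.div_atTop tendsto_const_nhds hden
    apply squeeze_zero (fun k => (tt_pos hσ (2 * k)).le) hub hdiv
  -- full sequence via antitonicity
  have hsq : ∀ n : ℕ, tt σ n ≤ tt σ (2 * (n / 2)) := by
    intro n
    exact tt_antitone hσ (Nat.mul_div_le n 2)
  have hcomp : Tendsto (fun n : ℕ => tt σ (2 * (n / 2))) atTop (𝓝 0) := by
    apply heven.comp
    apply tendsto_atTop_atTop.mpr
    intro b
    exact ⟨2 * b, fun a ha => by omega⟩
  exact squeeze_zero (fun n => (tt_pos hσ n).le) hsq hcomp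

/-- Existence of the limit with bounds. -/
lemma cf_exists {σ : ℝ} (hσ : 0 < σ) :
    ∃ L : ℝ, Tendsto (fun n => PP σ n / QQ σ n) atTop (𝓝 L) ∧
      σ ≤ L ∧ L ≤ σ + 1 / (2 * σ) := by
  obtain ⟨l, hl⟩ := (tt_antitone hσ).tendsto_alternating_series_of_tendsto_zero
    (tt_tendsto_zero hσ)
  refine ⟨σ + l, ?_, ?_, ?_⟩
  · have : (fun n => PP σ n / QQ σ n)
        = fun n => σ + ∑ i ∈ Finset.range n, (-1 : ℝ) ^ i * tt σ i := by
      funext n; exact y_eq_sum hσ n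
    rw [this]
    exact tendsto_const_nhds.add hl
  · have h0 := (tt_antitone hσ).alternating_series_le_tendsto hl 0
    simp at h0
    linarith
  · have h1 := (tt_antitone hσ).tendsto_le_alternating_series hl 0
    simp at h1
    have htt0 : tt σ 0 = 1 / (2 * σ) := by
      rw [tt, QQ0, QQ1, dd]
      norm_num
    rw [htt0] at h1
    linarith


/-- Brouncker's three bilinear identities, by joint induction. -/
lemma EFG (σ : ℝ) : ∀ n : ℕ,
    (PP σ n * PP (σ + 2) n - (σ + 1) ^ 2 * (QQ σ n * QQ (σ + 2) n)
        = (-1 : ℝ) ^ (n + 1) * dd n) ∧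
    (PP σ (n + 1) * PP (σ + 2) (n + 1) - (σ + 1) ^ 2 * (QQ σ (n + 1) * QQ (σ + 2) (n + 1))
        = (-1 : ℝ) ^ (n + 2) * dd (n + 1)) ∧
    (PP σ (n + 1) * PP (σ + 2) n - (σ + 1) ^ 2 * (QQ σ (n + 1) * QQ (σ + 2) n)
        = (-1 : ℝ) ^ n * dd n * (2 * (n : ℝ) + 2 - σ)) ∧
    (PP σ n * PP (σ + 2) (n + 1) - (σ + 1) ^ 2 * (QQ σ n * QQ (σ + 2) (n + 1))
        = (-1 : ℝ) ^ (n + 1) * dd n * (2 * (n : ℝ) + 4 + σ)) := by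
  intro n
  induction n with
  | zero =>
      rw [PP0, PP0, PP1, PP1, QQ0, QQ0, QQ1, QQ1]
      norm_num [dd]
      refine ⟨by ring, by ring, by ring, by ring⟩
  | succ n ih =>
      obtain ⟨hE, hE', hF, hG⟩ := ih
      have c2 : ((2 : ℝ) * n + 3) ^ 2 = (2 * (n:ℝ) + 3) ^ 2 := rfl
      -- recurrences at σ and σ+2
      have rP := PPrec σ n
      have rQ := QQrec σ n
      have rP' := PPrec (σ + 2) n
      have rQ' := QQrec (σ + 2) n
      have hdd1 : dd (n + 1) = (2 * (n:ℝ) + 3) ^ 2 * dd n := rfl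
      have hdd2 : dd (n + 2) = (2 * (n:ℝ) + 5) ^ 2 * dd (n + 1) := by
        have : dd (n + 2) = (2 * ((n + 1 : ℕ) : ℝ) + 3) ^ 2 * dd (n + 1) := rfl
        rw [this]; push_cast; ring_nf
      have hsgn : ∀ m : ℕ, ((-1 : ℝ)) ^ (m + 1) = -((-1) ^ m) := fun m => by
        rw [pow_succ]; ring
      refine ⟨hE', ?_, ?_, ?_⟩
      · -- E (n+2)
        rw [rP, rQ, rP', rQ', hdd2, hdd1]
        rw [hdd1] at hE'
        simp only [hsgn]
        push_cast
        linear_combination (2 * σ) * (2 * (σ + 2)) * hE' + (2 * σ) * (2 * (n:ℝ) + 3) ^ 2 * hF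
          + (2 * (σ + 2)) * (2 * (n:ℝ) + 3) ^ 2 * hG + ((2 * (n:ℝ) + 3) ^ 2) ^ 2 * hE
      · -- F (n+1) = P (n+2) σ * P (n+1) (σ+2) - ...
        rw [rP, rQ, hdd1]
        rw [hdd1] at hE'
        simp only [hsgn]
        push_cast
        linear_combination (2 * σ) * hE' + (2 * (n:ℝ) + 3) ^ 2 * hG
      · -- G (n+1) = P (n+1) σ * P (n+2) (σ+2) - ...
        rw [rP', rQ', hdd1]
        rw [hdd1] at hE'
        simp only [hsgn]
        push_cast
        linear_combination (2 * (σ + 2)) * hE' + (2 * (n:ℝ) + 3) ^ 2 * hF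


noncomputable def Lcf (σ : ℝ) : ℝ := if h : 0 < σ then (cf_exists h).choose else 0

lemma Lcf_tendsto {σ : ℝ} (hσ : 0 < σ) :
    Tendsto (fun n => PP σ n / QQ σ n) atTop (𝓝 (Lcf σ)) := by
  rw [Lcf, dif_pos hσ]; exact (cf_exists hσ).choose_spec.1

lemma Lcf_ge {σ : ℝ} (hσ : 0 < σ) : σ ≤ Lcf σ := by
  rw [Lcf, dif_pos hσ]; exact (cf_exists hσ).choose_spec.2.1

lemma Lcf_le {σ : ℝ} (hσ : 0 < σ) : Lcf σ ≤ σ + 1 / (2 * σ) := by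
  rw [Lcf, dif_pos hσ]; exact (cf_exists hσ).choose_spec.2.2

lemma Lcf_pos {σ : ℝ} (hσ : 0 < σ) : 0 < Lcf σ := lt_of_lt_of_le hσ (Lcf_ge hσ)

lemma Lcf_fe {σ : ℝ} (hσ : 0 < σ) : Lcf σ * Lcf (σ + 2) = (σ + 1) ^ 2 := by
  have hσ2 : 0 < σ + 2 := by linarith
  have hmul : Tendsto (fun n => (PP σ n / QQ σ n) * (PP (σ + 2) n / QQ (σ + 2) n)) atTop
      (𝓝 (Lcf σ * Lcf (σ + 2))) := (Lcf_tendsto hσ).mul (Lcf_tendsto hσ2)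
  have hid : ∀ n : ℕ, (PP σ n / QQ σ n) * (PP (σ + 2) n / QQ (σ + 2) n)
      = (σ + 1) ^ 2 + (-1 : ℝ) ^ (n + 1) * dd n / (QQ σ n * QQ (σ + 2) n) := by
    intro n
    have h1 := (QQ_pos hσ n).ne'
    have h2 := (QQ_pos hσ2 n).ne'
    have hE := (EFG σ n).1
    field_simp
    linear_combination hE
  have heven : Tendsto (fun k : ℕ => (PP σ (2 * k) / QQ σ (2 * k)) *
      (PP (σ + 2) (2 * k) / QQ (σ + 2) (2 * k))) atTop (𝓝 (Lcf σ * Lcf (σ + 2))) :=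
    hmul.comp (tendsto_atTop_atTop.mpr fun b => ⟨b, fun a ha => by omega⟩)
  have hodd : Tendsto (fun k : ℕ => (PP σ (2 * k + 1) / QQ σ (2 * k + 1)) *
      (PP (σ + 2) (2 * k + 1) / QQ (σ + 2) (2 * k + 1))) atTop (𝓝 (Lcf σ * Lcf (σ + 2))) :=
    hmul.comp (tendsto_atTop_atTop.mpr fun b => ⟨b, fun a ha => by omega⟩)
  have hle : Lcf σ * Lcf (σ + 2) ≤ (σ + 1) ^ 2 := by
    apply le_of_tendsto heven
    filter_upwards with k
    rw [hid (2 * k)]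
    have hsgn : (-1 : ℝ) ^ (2 * k + 1) = -1 := by
      rw [pow_succ, pow_mul]; norm_num
    rw [hsgn, neg_one_mul, neg_div]
    have : 0 ≤ dd (2 * k) / (QQ σ (2 * k) * QQ (σ + 2) (2 * k)) := by
      apply div_nonneg (dd_pos _).le
      exact (mul_pos (QQ_pos hσ _) (QQ_pos hσ2 _)).le
    linarith
  have hge : (σ + 1) ^ 2 ≤ Lcf σ * Lcf (σ + 2) := by
    apply ge_of_tendsto hodd
    filter_upwards with k
    rw [hid (2 * k + 1)]
    have hsgn : (-1 : ℝ) ^ (2 * k + 1 + 1) = 1 := by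
      rw [pow_succ, pow_succ, pow_mul]; norm_num
    rw [hsgn, one_mul]
    have : 0 ≤ dd (2 * k + 1) / (QQ σ (2 * k + 1) * QQ (σ + 2) (2 * k + 1)) := by
      apply div_nonneg (dd_pos _).le
      exact (mul_pos (QQ_pos hσ _) (QQ_pos hσ2 _)).le
    linarith
  linarith


/-- The Gamma-quotient side. -/
noncomputable def gg (σ : ℝ) : ℝ := 4 * (Real.Gamma ((3 + σ) / 4) / Real.Gamma ((1 + σ) / 4)) ^ 2

lemma gg_pos {σ : ℝ} (hσ : 0 < σ) : 0 < gg σ := by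
  have h1 : 0 < Real.Gamma ((3 + σ) / 4) := Real.Gamma_pos_of_pos (by linarith)
  have h2 : 0 < Real.Gamma ((1 + σ) / 4) := Real.Gamma_pos_of_pos (by linarith)
  rw [gg]; positivity

lemma gg_fe {σ : ℝ} (hσ : 0 < σ) : gg σ * gg (σ + 2) = (σ + 1) ^ 2 := by
  have h1 : 0 < Real.Gamma ((3 + σ) / 4) := Real.Gamma_pos_of_pos (by linarith)
  have h2 : 0 < Real.Gamma ((1 + σ) / 4) := Real.Gamma_pos_of_pos (by linarith)
  have e1 : (3 + (σ + 2)) / 4 = (1 + σ) / 4 + 1 := by ring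
  have e2 : (1 + (σ + 2)) / 4 = (3 + σ) / 4 := by ring
  rw [gg, gg, e1, e2, Real.Gamma_add_one (by positivity : (1 + σ) / 4 ≠ 0)]
  field_simp
  ring

/-- Convexity helper: for a convex function on `Ioi 0`,
`f b + f c ≤ f a + f d` whenever `a ≤ b, c ≤ d` and `a + d = b + c`. -/
lemma convex_four {f : ℝ → ℝ} (hf : ConvexOn ℝ (Set.Ioi 0) f) {a b c d : ℝ}
    (ha : 0 < a) (hab : a ≤ b) (hbd : b ≤ d) (hac : a ≤ c) (hcd : c ≤ d)
    (hsum : a + d = b + c) : f b + f c ≤ f a + f d := by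
  rcases eq_or_lt_of_le (hab.trans hbd) with heq | hlt
  · have hb : b = a := le_antisymm (heq ▸ hbd) hab
    have hc : c = a := by linarith
    rw [hb, hc, ← heq]
  · have hda : 0 < d - a := by linarith
    set t : ℝ := (d - b) / (d - a) with hts
    have ht0 : 0 ≤ t := div_nonneg (by linarith) hda.le
    have ht1 : t ≤ 1 := by rw [div_le_one hda]; linarith
    have ht1' : 0 ≤ 1 - t := by linarith
    have hmem_a : a ∈ Set.Ioi (0:ℝ) := ha
    have hmem_d : d ∈ Set.Ioi (0:ℝ) := by simp only [Set.mem_Ioi]; linarith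
    have htd : t * (d - a) = d - b := by rw [hts, div_mul_cancel₀ _ hda.ne']
    have hb' : t * a + (1 - t) * d = b := by
      linear_combination -htd
    have hc' : (1 - t) * a + t * d = c := by
      linear_combination htd + hsum
    have h1 := hf.2 hmem_a hmem_d ht0 ht1' (by ring)
    have h2 := hf.2 hmem_a hmem_d ht1' ht0 (by ring)
    rw [smul_eq_mul, smul_eq_mul, smul_eq_mul, smul_eq_mul] at h1 h2
    rw [hb'] at h1
    rw [hc'] at h2
    linarith

lemma gamma_prod_ineq {x y : ℝ} (hx : 0 < x) (hxy : x ≤ y) :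
    Real.Gamma (x + 1 / 2) * Real.Gamma y ≤ Real.Gamma x * Real.Gamma (y + 1 / 2) := by
  have h := convex_four Real.convexOn_log_Gamma hx
    (b := x + 1 / 2) (c := y) (d := y + 1 / 2)
    (by linarith) (by linarith) hxy (by linarith) (by ring)
  simp only [Function.comp] at h
  have ga : 0 < Real.Gamma x := Real.Gamma_pos_of_pos hx
  have gb : 0 < Real.Gamma (x + 1 / 2) := Real.Gamma_pos_of_pos (by linarith)
  have gc : 0 < Real.Gamma y := Real.Gamma_pos_of_pos (by linarith)
  have gd : 0 < Real.Gamma (y + 1 / 2) := Real.Gamma_pos_of_pos (by linarith)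
  have := Real.exp_le_exp.mpr h
  rwa [Real.exp_add, Real.exp_add, Real.exp_log gb, Real.exp_log gc, Real.exp_log ga,
    Real.exp_log gd] at this

lemma gamma_ratio_mono {x y : ℝ} (hx : 0 < x) (hxy : x ≤ y) :
    Real.Gamma (x + 1 / 2) / Real.Gamma x ≤ Real.Gamma (y + 1 / 2) / Real.Gamma y := by
  have ga : 0 < Real.Gamma x := Real.Gamma_pos_of_pos hx
  have gc : 0 < Real.Gamma y := Real.Gamma_pos_of_pos (by linarith)
  rw [div_le_div_iff₀ ga gc]
  linarith [gamma_prod_ineq hx hxy]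

lemma gg_mono {x y : ℝ} (hx : 0 < x) (hxy : x ≤ y) : gg x ≤ gg y := by
  have hu : 0 < (1 + x) / 4 := by linarith
  have hv : (1 + x) / 4 ≤ (1 + y) / 4 := by linarith
  have hratio := gamma_ratio_mono hu hv
  have e1 : (1 + x) / 4 + 1 / 2 = (3 + x) / 4 := by ring
  have e2 : (1 + y) / 4 + 1 / 2 = (3 + y) / 4 := by ring
  rw [e1, e2] at hratio
  have h1 : 0 < Real.Gamma ((3 + x) / 4) := Real.Gamma_pos_of_pos (by linarith)
  have h2 : 0 < Real.Gamma ((1 + x) / 4) := Real.Gamma_pos_of_pos (by linarith)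
  have hr0 : 0 ≤ Real.Gamma ((3 + x) / 4) / Real.Gamma ((1 + x) / 4) := by positivity
  rw [gg, gg]
  have := mul_self_le_mul_self hr0 hratio
  nlinarith

lemma gg_bounds {σ : ℝ} (hσ : 3 < σ) : σ - 1 ≤ gg σ ∧ gg σ ≤ σ + 1 := by
  have h0 : 0 < σ := by linarith
  have h2 : 0 < σ - 2 := by linarith
  have hub : gg σ ≤ σ + 1 := by
    have hm : gg σ ≤ gg (σ + 2) := gg_mono h0 (by linarith)
    have hfe := gg_fe h0
    have hp := gg_pos h0
    nlinarith
  have hlb : σ - 1 ≤ gg σ := by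
    have hm : gg (σ - 2) ≤ gg σ := gg_mono h2 (by linarith)
    have hfe := gg_fe h2
    rw [show σ - 2 + 2 = σ by ring, show σ - 2 + 1 = σ - 1 by ring] at hfe
    have hp := gg_pos h0
    have hp2 := gg_pos h2
    nlinarith
  exact ⟨hlb, hub⟩


lemma ladder {s : ℝ} (hs : 0 < s) :
    ∀ k : ℕ, Lcf s * gg (s + 4 * (k : ℝ)) = gg s * Lcf (s + 4 * (k : ℝ)) := by
  intro k
  induction k with
  | zero => norm_num [mul_comm]
  | succ k ih =>
      set σ : ℝ := s + 4 * (k : ℝ) with hσdef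
      have hk : (0:ℝ) ≤ 4 * (k : ℝ) := by positivity
      have hσ : 0 < σ := by rw [hσdef]; linarith
      have h2 : 0 < σ + 2 := by linarith
      have key : Lcf σ * gg (σ + 4) = gg σ * Lcf (σ + 4) := by
        have f1 := Lcf_fe hσ
        have f2 := Lcf_fe h2
        have g1 := gg_fe hσ
        have g2 := gg_fe h2
        rw [show σ + 2 + 2 = σ + 4 by ring] at f2 g2
        have hL2 := (Lcf_pos h2).ne'
        have hg2 := (gg_pos h2).ne'
        have hmain : (Lcf σ * gg (σ + 4)) * (Lcf (σ + 2) * gg (σ + 2))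
            = (gg σ * Lcf (σ + 4)) * (Lcf (σ + 2) * gg (σ + 2)) := by
          calc (Lcf σ * gg (σ + 4)) * (Lcf (σ + 2) * gg (σ + 2))
              = (Lcf σ * Lcf (σ + 2)) * (gg (σ + 2) * gg (σ + 4)) := by ring
            _ = (σ + 1) ^ 2 * (σ + 2 + 1) ^ 2 := by rw [f1, g2]
            _ = (gg σ * gg (σ + 2)) * (Lcf (σ + 2) * Lcf (σ + 4)) := by rw [g1, f2]
            _ = (gg σ * Lcf (σ + 4)) * (Lcf (σ + 2) * gg (σ + 2)) := by ring
        exact mul_right_cancel₀ (mul_ne_zero hL2 hg2) hmain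
      have e4 : s + 4 * (((k:ℕ) + 1 : ℕ) : ℝ) = σ + 4 := by push_cast; rw [hσdef]; ring
      rw [e4]
      have hgσ := (gg_pos hσ).ne'
      have hfin : (Lcf s * gg (σ + 4)) * gg σ = (gg s * Lcf (σ + 4)) * gg σ := by
        calc (Lcf s * gg (σ + 4)) * gg σ
            = (Lcf s * gg σ) * gg (σ + 4) := by ring
          _ = (gg s * Lcf σ) * gg (σ + 4) := by rw [ih]
          _ = gg s * (Lcf σ * gg (σ + 4)) := by ring
          _ = gg s * (gg σ * Lcf (σ + 4)) := by rw [key]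
          _ = (gg s * Lcf (σ + 4)) * gg σ := by ring
      exact mul_right_cancel₀ hgσ hfin

lemma Lcf_eq_gg {s : ℝ} (hs : 0 < s) : Lcf s = gg s := by
  have hσpos : ∀ k : ℕ, (0:ℝ) < s + 4 * (k : ℝ) := by
    intro k
    have : (0:ℝ) ≤ 4 * (k : ℝ) := by positivity
    linarith
  have hconst : ∀ k : ℕ, Lcf s / gg s = Lcf (s + 4 * (k:ℝ)) / gg (s + 4 * (k:ℝ)) := by
    intro k
    rw [div_eq_div_iff (gg_pos hs).ne' (gg_pos (hσpos k)).ne']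
    linear_combination ladder hs k
  -- the shifted ratio tends to 1
  have hσtop : Tendsto (fun k : ℕ => s + 4 * (k : ℝ)) atTop atTop := by
    apply tendsto_atTop_add_const_left
    exact Tendsto.const_mul_atTop (by norm_num) tendsto_natCast_atTop_atTop
  have hlow : Tendsto (fun k : ℕ => 1 - 1 / (s + 4 * (k:ℝ) + 1)) atTop (𝓝 1) := by
    have h0 : Tendsto (fun k : ℕ => 1 / (s + 4 * (k:ℝ) + 1)) atTop (𝓝 0) :=
      Tendsto.div_atTop tendsto_const_nhds
        (tendsto_atTop_add_const_right _ 1 hσtop)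
    have := Tendsto.sub (tendsto_const_nhds : Tendsto (fun _ : ℕ => (1:ℝ)) atTop (𝓝 1)) h0
    simpa using this
  have hup : Tendsto (fun k : ℕ => 1 + 2 / (s + 4 * (k:ℝ) - 1)) atTop (𝓝 1) := by
    have h0 : Tendsto (fun k : ℕ => 2 / (s + 4 * (k:ℝ) - 1)) atTop (𝓝 0) :=
      Tendsto.div_atTop tendsto_const_nhds
        (tendsto_atTop_add_const_right _ (-1) hσtop)
    have := Tendsto.add (tendsto_const_nhds : Tendsto (fun _ : ℕ => (1:ℝ)) atTop (𝓝 1)) h0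
    simpa using this
  have htend : Tendsto (fun k : ℕ => Lcf (s + 4 * (k:ℝ)) / gg (s + 4 * (k:ℝ))) atTop (𝓝 1) := by
    apply tendsto_of_tendsto_of_tendsto_of_le_of_le' hlow hup
    · -- eventual lower bound
      filter_upwards [eventually_ge_atTop 1] with k hk
      set σ : ℝ := s + 4 * (k : ℝ) with hσdef
      have hσ : 0 < σ := hσpos k
      have hσ3 : 3 < σ := by
        have : (1:ℝ) ≤ (k:ℝ) := by exact_mod_cast hk
        rw [hσdef]; linarith
      obtain ⟨hgl, hgu⟩ := gg_bounds hσ3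
      have hgp := gg_pos hσ
      have hLl := Lcf_ge hσ
      have h1 : σ / (σ + 1) ≤ Lcf σ / gg σ :=
        div_le_div₀ (by linarith [Lcf_pos hσ]) hLl hgp hgu
      have h2 : 1 - 1 / (σ + 1) = σ / (σ + 1) := by
        field_simp
        ring
      rw [h2]
      exact h1
    · -- eventual upper bound
      filter_upwards [eventually_ge_atTop 1] with k hk
      set σ : ℝ := s + 4 * (k : ℝ) with hσdef
      have hσ : 0 < σ := hσpos k
      have hσ3 : 3 < σ := by
        have : (1:ℝ) ≤ (k:ℝ) := by exact_mod_cast hk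
        rw [hσdef]; linarith
      obtain ⟨hgl, hgu⟩ := gg_bounds hσ3
      have hgp := gg_pos hσ
      have hLu : Lcf σ ≤ σ + 1 := by
        have := Lcf_le hσ
        have h12 : 1 / (2 * σ) ≤ 1 := by
          rw [div_le_one (by linarith)]
          linarith
        linarith
      have h1 : Lcf σ / gg σ ≤ (σ + 1) / (σ - 1) :=
        div_le_div₀ (by linarith) hLu (by linarith) hgl
      have h2 : 1 + 2 / (σ - 1) = (σ + 1) / (σ - 1) := by
        have hne : σ - 1 ≠ 0 := by linarith
        field_simp
        ring
      rw [h2]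
      exact h1
  have hconst' : Tendsto (fun _ : ℕ => Lcf s / gg s) atTop (𝓝 1) := by
    rw [tendsto_congr hconst]
    exact htend
  have : Lcf s / gg s = 1 := tendsto_nhds_unique tendsto_const_nhds hconst'
  exact (div_eq_one_iff_eq (gg_pos hs).ne').mp this

end Brnckr

theorem ramanujan_brouncker (s : ℝ) (hs : 0 < s) :
    IsCFLimit s (fun n => (2 * (n : ℝ) - 1) ^ 2) (fun _ => 2 * s)
      (4 * (Real.Gamma ((3 + s) / 4) / Real.Gamma ((1 + s) / 4)) ^ 2) := by
  have h := Brnckr.Lcf_tendsto hs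
  rw [Brnckr.Lcf_eq_gg hs] at h
  exact h
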